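/- The following three conditions are equivalent: (1) for every move z in the minimum-fiber set B_MF, every B_{|Az⁺|−1}-equivalence class of the fiber F_{Az⁺} is a singleton; (2) there exists a minimal Markov basis B such that for every z ∈ B both z⁺ and z⁻ are indispensable monomials; (3) for every minimal Markov basis B and every z ∈ B, both z⁺ and z⁻ are indispensable monomials. -/

import Mathlib

open scoped BigOperators

section Defs

variable {ι κ : Type*} [Fintype ι]

/-- Embed a frequency vector `x ∈ ℕ^ι` into `ℤ^ι`. -/
def natToInt (x : ι → ℕ) : ι → ℤ := fun i => (x i : ℤ)

/-- The fiber of `t`: all frequency vectors `x` with `A x = t`. -/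
def fiberOf (A : Matrix κ ι ℤ) (t : κ → ℤ) : Set (ι → ℕ) :=
  {x | A.mulVec (natToInt x) = t}

/-- A move for `A`: an integer vector in the kernel of `A`. -/
def IsMove (A : Matrix κ ι ℤ) (z : ι → ℤ) : Prop := A.mulVec z = 0

/-- The positive part `z⁺` of an integer vector, as a frequency vector. -/
def posOf (z : ι → ℤ) : ι → ℕ := fun i => (z i).toNat

/-- The negative part `z⁻` of an integer vector, as a frequency vector. -/
def negOf (z : ι → ℤ) : ι → ℕ := fun i => (-z i).toNat

/-- The degree of a move: `deg z = |z⁺|`. -/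
def degOf (z : ι → ℤ) : ℕ := ∑ i, posOf z i

/-- One step: add or subtract one move of `B`, staying in `ℕ^ι`. -/
def MStep (B : Set (ι → ℤ)) (x y : ι → ℕ) : Prop :=
  ∃ z ∈ B, natToInt y = natToInt x + z ∨ natToInt y = natToInt x - z

/-- `y` is accessible from `x` by the moves of `B` (staying nonnegative throughout,
since all intermediate points are frequency vectors). -/
def Accessible (B : Set (ι → ℤ)) : (ι → ℕ) → (ι → ℕ) → Prop :=
  Relation.ReflTransGen (MStep B)

/-- A Markov basis: a finite set of moves such that every fiber forms a single
equivalence class for mutual accessibility. -/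
def IsMarkovBasis (A : Matrix κ ι ℤ) (B : Set (ι → ℤ)) : Prop :=
  B.Finite ∧ (∀ z ∈ B, IsMove A z) ∧
    ∀ t : κ → ℤ, ∀ x ∈ fiberOf A t, ∀ y ∈ fiberOf A t, Accessible B x y

/-- A minimal Markov basis: no proper subset is a Markov basis. -/
def IsMinimalMarkovBasis (A : Matrix κ ι ℤ) (B : Set (ι → ℤ)) : Prop :=
  IsMarkovBasis A B ∧ ∀ B' ⊂ B, ¬ IsMarkovBasis A B'

/-- An indispensable monomial: every Markov basis contains a move whose
positive or negative part is `x`. -/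
def IsIndispensableMonomial (A : Matrix κ ι ℤ) (x : ι → ℕ) : Prop :=
  ∀ B : Set (ι → ℤ), IsMarkovBasis A B → ∃ z ∈ B, posOf z = x ∨ negOf z = x

/-- `B_n`: the set of moves of degree at most `n`. -/
def Bmoves (A : Matrix κ ι ℤ) (n : ℕ) : Set (ι → ℤ) :=
  {z | IsMove A z ∧ degOf z ≤ n}

/-- The sample size `|t|` of a sufficient statistic `t` (well defined on nonempty
fibers under homogeneity). -/
noncomputable def sampleSize (A : Matrix κ ι ℤ) (t : κ → ℤ) : ℕ :=
  sInf {n | ∃ x ∈ fiberOf A t, ∑ i, x i = n}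

/-- The `B_{|t|-1}`-equivalence classes of the fiber of `t`. -/
noncomputable def fiberClasses (A : Matrix κ ι ℤ) (t : κ → ℤ) : Set (Set (ι → ℕ)) :=
  {C | ∃ x ∈ fiberOf A t,
    C = {y | y ∈ fiberOf A t ∧ Accessible (Bmoves A (sampleSize A t - 1)) x y}}

/-- Homogeneity: some rational vector `w` has `w ⬝ aᵢ = 1` for every column `aᵢ`. -/
def IsHomogeneousMatrix [Fintype κ] (A : Matrix κ ι ℤ) : Prop :=
  ∃ w : κ → ℚ, ∀ i : ι, ∑ j, w j * (A j i : ℚ) = 1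

end Defs

/-- The minimum-fiber set `B_MF`: nonzero moves whose positive and negative parts are
not mutually accessible by moves of lower degree. -/
def BMF {p d : ℕ} (A : Matrix (Fin d) (Fin p) ℤ) : Set (Fin p → ℤ) :=
  {z | IsMove A z ∧ z ≠ 0 ∧
    ¬ Accessible (Bmoves A (degOf z - 1)) (posOf z) (negOf z)}


namespace MBAux

section Basic
variable {ι : Type*} {B B' : Set (ι → ℤ)} {x y : ι → ℕ}

lemma mstep_symm (h : MStep B x y) : MStep B y x := by
  obtain ⟨z, hz, h | h⟩ := h
  · exact ⟨z, hz, Or.inr (by rw [h]; ring)⟩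
  · exact ⟨z, hz, Or.inl (by rw [h]; ring)⟩

lemma access_symm (h : Accessible B x y) : Accessible B y x := by
  induction h with
  | refl => exact .refl
  | tail _ hstep ih => exact Relation.ReflTransGen.head (mstep_symm hstep) ih

lemma mstep_translate (c : ι → ℕ) (h : MStep B x y) : MStep B (x + c) (y + c) := by
  obtain ⟨z, hz, h | h⟩ := h
  · refine ⟨z, hz, Or.inl (funext fun i => ?_)⟩
    have := congrFun h i
    simp [natToInt] at this ⊢
    omega
  · refine ⟨z, hz, Or.inr (funext fun i => ?_)⟩
    have := congrFun h i
    simp [natToInt] at this ⊢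
    omega

lemma access_translate (c : ι → ℕ) (h : Accessible B x y) : Accessible B (x + c) (y + c) := by
  induction h with
  | refl => exact .refl
  | tail _ hstep ih => exact ih.tail (mstep_translate c hstep)

lemma access_mono (hBB : B ⊆ B') (h : Accessible B x y) : Accessible B' x y := by
  induction h with
  | refl => exact .refl
  | tail _ hstep ih =>
      obtain ⟨z, hz, hor⟩ := hstep
      exact ih.tail ⟨z, hBB hz, hor⟩

lemma mstep_parts {z : ι → ℤ} (hz : z ∈ B) (c : ι → ℕ) :
    MStep B (c + negOf z) (c + posOf z) :=
  ⟨z, hz, Or.inl (funext fun i => by simp [natToInt, posOf, negOf]; omega)⟩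

lemma mstep_decomp (h : MStep B x y) :
    ∃ z ∈ B, ∃ c : ι → ℕ,
      (x = c + negOf z ∧ y = c + posOf z) ∨ (x = c + posOf z ∧ y = c + negOf z) := by
  obtain ⟨z, hz, h | h⟩ := h
  · refine ⟨z, hz, fun i => x i - negOf z i, Or.inl ⟨funext fun i => ?_, funext fun i => ?_⟩⟩ <;>
    · have := congrFun h i
      simp [natToInt, posOf, negOf] at this ⊢
      omega
  · refine ⟨z, hz, fun i => x i - posOf z i, Or.inr ⟨funext fun i => ?_, funext fun i => ?_⟩⟩ <;>
    · have := congrFun h i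
      simp [natToInt, posOf, negOf] at this ⊢
      omega

end Basic

section Hom
variable {p d : ℕ} {A : Matrix (Fin d) (Fin p) ℤ} {w : Fin d → ℚ}
  {B B' : Set (Fin p → ℤ)} {x y : Fin p → ℕ}

/-- Homogeneity data. -/
def HW (A : Matrix (Fin d) (Fin p) ℤ) (w : Fin d → ℚ) : Prop :=
  ∀ i : Fin p, ∑ j, w j * (A j i : ℚ) = 1

lemma sum_eq_of_mulVec_eq (hw : HW A w)
    (h : A.mulVec (natToInt x) = A.mulVec (natToInt y)) :
    ∑ i, x i = ∑ i, y i := by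
  have key : ∀ x : Fin p → ℕ,
      (∑ i, (x i : ℚ)) = ∑ j, w j * ((A.mulVec (natToInt x)) j : ℚ) := by
    intro x
    have h1 : ∀ j, ((A.mulVec (natToInt x)) j : ℚ) = ∑ i, (A j i : ℚ) * (x i : ℚ) := by
      intro j
      simp only [Matrix.mulVec, dotProduct, natToInt]
      push_cast
      rfl
    simp_rw [h1, Finset.mul_sum]
    rw [Finset.sum_comm]
    have h2 : ∀ i : Fin p, (∑ j, w j * ((A j i : ℚ) * (x i : ℚ))) = (x i : ℚ) := by
      intro i
      rw [show (∑ j, w j * ((A j i : ℚ) * (x i : ℚ))) = (∑ j, w j * (A j i : ℚ)) * x i by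
        rw [Finset.sum_mul]; exact Finset.sum_congr rfl fun j _ => by ring, hw i, one_mul]
    simp_rw [h2]
  have : (∑ i, (x i : ℚ)) = ∑ i, (y i : ℚ) := by rw [key, key, h]
  exact_mod_cast this

lemma natToInt_pos_sub_neg (z : Fin p → ℤ) :
    natToInt (posOf z) = natToInt (negOf z) + z :=
  funext fun i => by simp [natToInt, posOf, negOf]; omega

lemma mulVec_pos_eq_neg {z : Fin p → ℤ} (hz : IsMove A z) :
    A.mulVec (natToInt (posOf z)) = A.mulVec (natToInt (negOf z)) := by
  rw [natToInt_pos_sub_neg z, Matrix.mulVec_add, hz, add_zero]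

lemma deg_pos_eq_neg (hw : HW A w) {z : Fin p → ℤ} (hz : IsMove A z) :
    ∑ i, posOf z i = ∑ i, negOf z i :=
  sum_eq_of_mulVec_eq hw (mulVec_pos_eq_neg hz)

lemma sum_add (c x : Fin p → ℕ) : ∑ i, (c + x) i = (∑ i, c i) + ∑ i, x i := by
  simp [Finset.sum_add_distrib]

/-- A step by a move preserves the fiber. -/
lemma mstep_fiber (hB : ∀ z ∈ B, IsMove A z) (h : MStep B x y) :
    A.mulVec (natToInt y) = A.mulVec (natToInt x) := by
  obtain ⟨z, hz, h | h⟩ := h <;>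
    rw [h] <;>
    simp [Matrix.mulVec_add, Matrix.mulVec_sub, show A.mulVec z = 0 from hB z hz]

lemma access_fiber (hB : ∀ z ∈ B, IsMove A z) (h : Accessible B x y) :
    A.mulVec (natToInt y) = A.mulVec (natToInt x) := by
  induction h with
  | refl => rfl
  | tail _ hstep ih => rw [mstep_fiber hB hstep, ih]

lemma mstep_sum (hw : HW A w) (hB : ∀ z ∈ B, IsMove A z) (h : MStep B x y) :
    ∑ i, y i = ∑ i, x i :=
  sum_eq_of_mulVec_eq hw (mstep_fiber hB h)

lemma access_sum (hw : HW A w) (hB : ∀ z ∈ B, IsMove A z) (h : Accessible B x y) :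
    ∑ i, y i = ∑ i, x i :=
  sum_eq_of_mulVec_eq hw (access_fiber hB h)

/-- A path inside a fiber of small sample size only uses moves of small degree. -/
lemma access_restrict (hw : HW A w) (hB : ∀ z ∈ B, IsMove A z) {n : ℕ}
    (hsub : ∀ z ∈ B, degOf z < n → z ∈ B') :
    ∀ x y : Fin p → ℕ, Accessible B x y → ∑ i, x i < n → Accessible B' x y := by
  intro x y h
  induction h using Relation.ReflTransGen.head_induction_on with
  | refl => exact fun _ => .refl
  | head hstep htail ih =>
      rename_i a c
      intro hx
      obtain ⟨z, hzB, cc, hor⟩ := mstep_decomp hstep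
      have hdeg : degOf z < n := by
        have h1 : degOf z = ∑ i, posOf z i := rfl
        have h2 := deg_pos_eq_neg hw (hB z hzB)
        rcases hor with ⟨ha, -⟩ | ⟨ha, -⟩
        · have : ∑ i, a i = (∑ i, cc i) + ∑ i, negOf z i := by rw [ha, sum_add]
          omega
        · have : ∑ i, a i = (∑ i, cc i) + ∑ i, posOf z i := by rw [ha, sum_add]
          omega
      have hsum : ∑ i, c i = ∑ i, a i := mstep_sum hw hB hstep
      have hstep' : MStep B' a c := by
        rcases hor with ⟨ha, hc⟩ | ⟨ha, hc⟩
        · rw [ha, hc]; exact mstep_parts (hsub z hzB hdeg) cc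
        · rw [ha, hc]; exact mstep_symm (mstep_parts (hsub z hzB hdeg) cc)
      exact Relation.ReflTransGen.head hstep' (ih (by omega))


lemma mem_fiber {t : Fin d → ℤ} : x ∈ fiberOf A t ↔ A.mulVec (natToInt x) = t := Iff.rfl

lemma bmoves_moves {m : ℕ} : ∀ z ∈ Bmoves A m, IsMove A z := fun _ hz => hz.1

lemma access_parts {z : Fin p → ℤ} (hz : z ∈ B) : Accessible B (negOf z) (posOf z) :=
  Relation.ReflTransGen.single
    ⟨z, hz, Or.inl (funext fun i => by simp [natToInt, posOf, negOf]; omega)⟩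

lemma mstep_simulate (hsim : ∀ z ∈ B, Accessible B' (negOf z) (posOf z))
    (h : MStep B x y) : Accessible B' x y := by
  obtain ⟨z, hz, c, hor⟩ := mstep_decomp h
  rcases hor with ⟨ha, hc⟩ | ⟨ha, hc⟩
  · rw [ha, hc, add_comm c (negOf z), add_comm c (posOf z)]
    exact access_translate c (hsim z hz)
  · rw [ha, hc, add_comm c (negOf z), add_comm c (posOf z)]
    exact access_symm (access_translate c (hsim z hz))

lemma access_simulate (hsim : ∀ z ∈ B, Accessible B' (negOf z) (posOf z))
    (h : Accessible B x y) : Accessible B' x y := by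
  induction h with
  | refl => exact .refl
  | tail _ hstep ih => exact ih.trans (mstep_simulate hsim hstep)

lemma tight_step (hw : HW A w) (hB : ∀ z ∈ B, IsMove A z) {n : ℕ}
    (h : MStep B x y) (hx : ∑ i, x i = n) :
    MStep (Bmoves A (n-1)) x y ∨
      ∃ z ∈ B, (posOf z = x ∧ negOf z = y) ∨ (negOf z = x ∧ posOf z = y) := by
  obtain ⟨z, hzB, c, hor⟩ := mstep_decomp h
  have hdeg2 := deg_pos_eq_neg hw (hB z hzB)
  have hdegdef : degOf z = ∑ i, posOf z i := rfl
  have hsum : (∑ i, c i) + degOf z = n := by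
    rcases hor with ⟨ha, -⟩ | ⟨ha, -⟩
    · have : ∑ i, x i = (∑ i, c i) + ∑ i, negOf z i := by rw [ha, sum_add]
      omega
    · have : ∑ i, x i = (∑ i, c i) + ∑ i, posOf z i := by rw [ha, sum_add]
      omega
  by_cases hd : degOf z ≤ n - 1
  · left
    rcases hor with ⟨ha, hc⟩ | ⟨ha, hc⟩
    · rw [ha, hc]; exact mstep_parts (show z ∈ Bmoves A (n-1) from ⟨hB z hzB, hd⟩) c
    · rw [ha, hc]; exact mstep_symm (mstep_parts (show z ∈ Bmoves A (n-1) from ⟨hB z hzB, hd⟩) c)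
  · right
    have hc0 : ∀ i, c i = 0 := by
      have : ∑ i, c i = 0 := by omega
      intro i
      exact Finset.sum_eq_zero_iff.mp this i (Finset.mem_univ i)
    refine ⟨z, hzB, ?_⟩
    rcases hor with ⟨ha, hc⟩ | ⟨ha, hc⟩
    · exact Or.inr ⟨by rw [ha]; exact funext fun i => by simp [hc0 i],
        by rw [hc]; exact funext fun i => by simp [hc0 i]⟩
    · exact Or.inl ⟨by rw [ha]; exact funext fun i => by simp [hc0 i],
        by rw [hc]; exact funext fun i => by simp [hc0 i]⟩

lemma sampleSize_eq (hw : HW A w) {t : Fin d → ℤ} (hx : x ∈ fiberOf A t) :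
    sampleSize A t = ∑ i, x i := by
  have hset : {n | ∃ y ∈ fiberOf A t, ∑ i, y i = n} = {∑ i, x i} := by
    ext n
    simp only [Set.mem_setOf_eq, Set.mem_singleton_iff]
    constructor
    · rintro ⟨y, hy, rfl⟩
      exact sum_eq_of_mulVec_eq hw (by rw [mem_fiber.mp hy, mem_fiber.mp hx])
    · rintro rfl
      exact ⟨x, hx, rfl⟩
  rw [sampleSize, hset, csInf_singleton]

lemma exit_step (hw : HW A w) (hB : ∀ z ∈ B, IsMove A z) {n : ℕ} {x₀ : Fin p → ℕ}
    (hn : ∑ i, x₀ i = n) :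
    ∀ y, Accessible B x₀ y → ¬ Accessible (Bmoves A (n-1)) x₀ y →
    ∃ z ∈ B, ∃ u v : Fin p → ℕ, Accessible (Bmoves A (n-1)) x₀ u ∧
      ¬ Accessible (Bmoves A (n-1)) x₀ v ∧
      ((posOf z = u ∧ negOf z = v) ∨ (negOf z = u ∧ posOf z = v)) := by
  intro y h
  induction h with
  | refl => exact fun hy => absurd .refl hy
  | @tail b cpt hab hstep ih =>
      intro hy
      by_cases hb : Accessible (Bmoves A (n-1)) x₀ b
      · have hsb : ∑ i, b i = n := by rw [access_sum hw hB hab, hn]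
        rcases tight_step hw hB hstep hsb with hst | ⟨z, hzB, hor⟩
        · exact absurd (hb.tail hst) hy
        · rcases hor with ⟨hu, hv⟩ | ⟨hu, hv⟩
          · exact ⟨z, hzB, b, cpt, hb, hy, Or.inl ⟨hu, hv⟩⟩
          · exact ⟨z, hzB, b, cpt, hb, hy, Or.inr ⟨hu, hv⟩⟩
      · exact ih hb


lemma eq_of_le_of_sum_le {a b : Fin p → ℕ} (hle : ∀ i, a i ≤ b i)
    (hs : ∑ i, b i ≤ ∑ i, a i) : a = b := by
  funext i
  by_contra hne
  have hlt : a i < b i := lt_of_le_of_ne (hle i) hne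
  have : ∑ j, a j < ∑ j, b j :=
    Finset.sum_lt_sum (fun j _ => hle j) ⟨i, Finset.mem_univ i, hlt⟩
  omega

lemma zero_of_pos_eq_neg {z : Fin p → ℤ} (h : posOf z = negOf z) : ∀ i, z i = 0 := by
  intro i
  have := congrFun h i
  simp [posOf, negOf] at this
  omega

/-- Lift accessibility by low-degree moves to accessibility by any set `B'`
containing all low-degree moves of a Markov basis `B`. -/
lemma lift_small (hw : HW A w) (hB : IsMarkovBasis A B) {n : ℕ} (hn1 : 1 ≤ n)
    (hsub : ∀ e ∈ B, degOf e < n → e ∈ B') :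
    ∀ a b : Fin p → ℕ, Accessible (Bmoves A (n-1)) a b → Accessible B' a b := by
  intro a b h
  refine access_simulate (fun f hf => ?_) h
  have hfm : IsMove A f := hf.1
  have hacc : Accessible B (negOf f) (posOf f) :=
    hB.2.2 (A.mulVec (natToInt (negOf f))) (negOf f) rfl (posOf f)
      (mulVec_pos_eq_neg hfm)
  refine access_restrict hw hB.2.1 hsub (negOf f) (posOf f) hacc ?_
  have h1 : ∑ i, negOf f i = degOf f := (deg_pos_eq_neg hw hfm).symm
  have h2 : degOf f ≤ n - 1 := hf.2
  omega

/-- A move whose endpoints are connected by lower-degree moves can be removed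
from a Markov basis. -/
lemma remove_redundant (hw : HW A w) {z : Fin p → ℤ} (hB : IsMarkovBasis A B)
    (hacc : Accessible (Bmoves A (degOf z - 1)) (posOf z) (negOf z)) :
    IsMarkovBasis A (B \ {z}) := by
  refine ⟨hB.1.subset Set.diff_subset, fun e he => hB.2.1 e he.1, fun t x hx y hy => ?_⟩
  refine access_simulate (fun h hh => ?_) (hB.2.2 t x hx y hy)
  by_cases hhz : h = z
  · subst hhz
    by_cases h0 : posOf h = negOf h
    · rw [h0]; exact .refl
    · have hn1 : 1 ≤ degOf h := by
        by_contra hc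
        have hzero : ∑ i, posOf h i = 0 := by
          have : degOf h = ∑ i, posOf h i := rfl
          omega
        have hzero' : ∑ i, negOf h i = 0 := by
          have := deg_pos_eq_neg hw (hB.2.1 h hh)
          omega
        refine h0 (funext fun i => ?_)
        have a1 := Finset.sum_eq_zero_iff.mp hzero i (Finset.mem_univ i)
        have a2 := Finset.sum_eq_zero_iff.mp hzero' i (Finset.mem_univ i)
        omega
      have hsub : ∀ e ∈ B, degOf e < degOf h → e ∈ B \ {h} := by
        intro e he hde
        exact ⟨he, fun hc => by rw [Set.mem_singleton_iff] at hc; subst hc; omega⟩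
      exact access_symm (lift_small hw hB hn1 hsub _ _ hacc)
  · exact access_parts (Set.mem_diff_of_mem hh (by simp [hhz]))

/-- Replacement: if `u` is connected to some other `u'` by lower-degree moves, then
there is a Markov basis avoiding `u` as a positive or negative part. -/
lemma replacement (hw : HW A w) (hB : IsMarkovBasis A B) {u u' : Fin p → ℕ} {n : ℕ}
    (hn : ∑ i, u i = n) (hn1 : 1 ≤ n) (hne : u ≠ u')
    (hacc : Accessible (Bmoves A (n-1)) u u') :
    ∃ B'' : Set (Fin p → ℤ), IsMarkovBasis A B'' ∧
      ∀ h ∈ B'', posOf h ≠ u ∧ negOf h ≠ u := by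
  classical
  have hsu' : ∑ i, u' i = n := by rw [access_sum hw bmoves_moves hacc, hn]
  have hfib : A.mulVec (natToInt u') = A.mulVec (natToInt u) :=
    access_fiber bmoves_moves hacc
  set f1 : (Fin p → ℤ) → (Fin p → ℤ) := fun h => natToInt u' - natToInt (negOf h) with hf1
  set f2 : (Fin p → ℤ) → (Fin p → ℤ) := fun h => natToInt u' - natToInt (posOf h) with hf2
  set B0 : Set (Fin p → ℤ) := {h ∈ B | posOf h ≠ u ∧ negOf h ≠ u} with hB0
  set B1 : Set (Fin p → ℤ) := f1 '' {h ∈ B | posOf h = u} with hB1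
  set B2 : Set (Fin p → ℤ) := f2 '' {h ∈ B | negOf h = u} with hB2
  set B'' : Set (Fin p → ℤ) := (B0 ∪ B1) ∪ B2 with hB''
  -- all elements are moves
  have hmoves : ∀ e ∈ B'', IsMove A e := by
    rintro e ((he | he) | he)
    · exact hB.2.1 e he.1
    · obtain ⟨h, ⟨hhB, hp⟩, rfl⟩ := he
      show A.mulVec _ = 0
      rw [Matrix.mulVec_sub, hfib, ← congrArg natToInt hp,
        mulVec_pos_eq_neg (hB.2.1 h hhB), sub_self]
    · obtain ⟨h, ⟨hhB, hq⟩, rfl⟩ := he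
      show A.mulVec _ = 0
      rw [Matrix.mulVec_sub, hfib, ← congrArg natToInt hq,
        mulVec_pos_eq_neg (hB.2.1 h hhB), sub_self]
  -- B'' avoids u
  have havoid : ∀ e ∈ B'', posOf e ≠ u ∧ negOf e ≠ u := by
    rintro e he'
    have hdeg_e : ∑ i, posOf e i = ∑ i, negOf e i := deg_pos_eq_neg hw (hmoves e he')
    rcases he' with ((he | he) | he)
    · exact he.2
    · obtain ⟨h, ⟨hhB, hp⟩, rfl⟩ := he
      have hple : ∀ i, posOf (f1 h) i ≤ u' i := by
        intro i; simp only [hf1, Pi.sub_apply, posOf, negOf, natToInt]; omega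
      have hnle : ∀ i, negOf (f1 h) i ≤ negOf h i := by
        intro i; simp only [hf1, Pi.sub_apply, posOf, negOf, natToInt]; omega
      have hsnegh : ∑ i, negOf h i = n := by
        have := deg_pos_eq_neg hw (hB.2.1 h hhB)
        rw [← this, hp, hn]
      constructor
      · intro hc
        have : posOf (f1 h) = u' := eq_of_le_of_sum_le hple (by rw [hc, hn, hsu'])
        exact hne (by rw [← hc, this])
      · intro hc
        have h1 : negOf (f1 h) = negOf h :=
          eq_of_le_of_sum_le hnle (by rw [hc, hn, hsnegh])
        have h2 : posOf h = negOf h := by rw [hp, ← hc, h1]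
        have h3 := zero_of_pos_eq_neg h2
        have : ∑ i, u i = 0 := by
          rw [← hp]
          exact Finset.sum_eq_zero fun i _ => by have := h3 i; simp [posOf]; omega
        omega
    · obtain ⟨h, ⟨hhB, hq⟩, rfl⟩ := he
      have hple : ∀ i, posOf (f2 h) i ≤ u' i := by
        intro i; simp only [hf2, Pi.sub_apply, posOf, negOf, natToInt]; omega
      have hnle : ∀ i, negOf (f2 h) i ≤ posOf h i := by
        intro i; simp only [hf2, Pi.sub_apply, posOf, negOf, natToInt]; omega
      have hsposh : ∑ i, posOf h i = n := by
        have := deg_pos_eq_neg hw (hB.2.1 h hhB)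
        rw [this, hq, hn]
      constructor
      · intro hc
        have : posOf (f2 h) = u' := eq_of_le_of_sum_le hple (by rw [hc, hn, hsu'])
        exact hne (by rw [← hc, this])
      · intro hc
        have h1 : negOf (f2 h) = posOf h :=
          eq_of_le_of_sum_le hnle (by rw [hc, hn, hsposh])
        have h2 : posOf h = negOf h := by rw [← h1, hc, hq]
        have h3 := zero_of_pos_eq_neg h2
        have : ∑ i, u i = 0 := by
          rw [← hc, h1]
          exact Finset.sum_eq_zero fun i _ => by have := h3 i; simp [posOf]; omega
        omega
  refine ⟨B'', ⟨?_, hmoves, ?_⟩, havoid⟩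
  · exact ((hB.1.subset (Set.sep_subset _ _)).union
      ((hB.1.subset (Set.sep_subset _ _)).image f1)).union
      ((hB.1.subset (Set.sep_subset _ _)).image f2)
  · intro t x hx y hy
    have hsub : ∀ e ∈ B, degOf e < n → e ∈ B'' := by
      intro e he hde
      have h1 : ∑ i, posOf e i = degOf e := rfl
      have h2 : ∑ i, negOf e i = degOf e := (deg_pos_eq_neg hw (hB.2.1 e he)).symm
      refine Or.inl (Or.inl ⟨he, fun hc => ?_, fun hc => ?_⟩)
      · have hs : ∑ i, posOf e i = ∑ i, u i := by rw [hc]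
        omega
      · have hs : ∑ i, negOf e i = ∑ i, u i := by rw [hc]
        omega
    have lift : ∀ a b : Fin p → ℕ, Accessible (Bmoves A (n-1)) a b → Accessible B'' a b :=
      lift_small hw hB hn1 hsub
    refine access_simulate (fun h hh => ?_) (hB.2.2 t x hx y hy)
    by_cases h0 : posOf h = negOf h
    · rw [h0]; exact .refl
    by_cases hp : posOf h = u
    · have step1 : MStep B'' (negOf h) u' := by
        refine ⟨f1 h, Or.inl (Or.inr ⟨h, ⟨hh, hp⟩, rfl⟩), Or.inl ?_⟩
        simp [hf1]
      rw [hp]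
      exact (Relation.ReflTransGen.single step1).trans (lift _ _ (access_symm hacc))
    by_cases hq : negOf h = u
    · have step1 : MStep B'' (posOf h) u' := by
        refine ⟨f2 h, Or.inr ⟨h, ⟨hh, hq⟩, rfl⟩, Or.inl ?_⟩
        simp [hf2]
      rw [hq]
      exact access_symm
        ((Relation.ReflTransGen.single step1).trans (lift _ _ (access_symm hacc)))
    · exact access_parts (Or.inl (Or.inl ⟨hh, hp, hq⟩))


/-! ### Existence of a (minimal) Markov basis via Graver-type moves -/

/-- Sign pairs of nonzero moves. -/
def GraverS (A : Matrix (Fin d) (Fin p) ℤ) : Set ((Fin p → ℕ) × (Fin p → ℕ)) :=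
  {s | ∃ z, IsMove A z ∧ z ≠ 0 ∧ s = (posOf z, negOf z)}

/-- The "Graver" moves: nonzero moves with minimal sign pair. -/
def Graver (A : Matrix (Fin d) (Fin p) ℤ) : Set (Fin p → ℤ) :=
  {g | IsMove A g ∧ g ≠ 0 ∧ ∀ s ∈ GraverS A, ¬ s < (posOf g, negOf g)}

instance natLtIsWellOrder : IsWellOrder ℕ (· < ·) := inferInstance

lemma graverS_isPWO : (GraverS A).IsPWO := by
  refine (((Set.isPWO_of_wellQuasiOrderedLE (Set.univ : Set (Fin p → ℕ))).prod
    (Set.isPWO_of_wellQuasiOrderedLE (Set.univ : Set (Fin p → ℕ)))).mono ?_)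
  intro s _
  simp [Set.mem_prod]

lemma graver_finite : (Graver A).Finite := by
  classical
  set M := {s ∈ GraverS A | ∀ s' ∈ GraverS A, ¬ s' < s} with hM
  have hanti : IsAntichain (· ≤ ·) M := by
    intro a ha b hb hne hle
    exact hb.2 a ha.1 (lt_of_le_of_ne hle hne)
  have hMfin : M.Finite :=
    hanti.finite_of_partiallyWellOrderedOn (graverS_isPWO.mono (Set.sep_subset _ _))
  refine Set.Finite.subset (hMfin.image fun s => natToInt s.1 - natToInt s.2) ?_
  rintro g ⟨hmove, hg0, hmin⟩
  refine ⟨(posOf g, negOf g), ⟨⟨g, hmove, hg0, rfl⟩, fun s' hs' => hmin s' hs'⟩, ?_⟩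
  funext i
  simp [natToInt, posOf, negOf]

lemma graver_connect : ∀ m : ℕ, ∀ x y : Fin p → ℕ,
    (∑ i, ((x i : ℤ) - (y i : ℤ)).natAbs) = m →
    A.mulVec (natToInt x) = A.mulVec (natToInt y) → Accessible (Graver A) x y := by
  intro m
  induction m using Nat.strong_induction_on with
  | _ m IH =>
  intro x y hm hfib
  by_cases hxy : x = y
  · exact hxy ▸ .refl
  set z : Fin p → ℤ := natToInt y - natToInt x with hz
  have hzi : ∀ i, z i = (y i : ℤ) - (x i : ℤ) := fun i => rfl
  have hz0 : z ≠ 0 := by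
    intro hc
    refine hxy (funext fun i => ?_)
    have := congrFun hc i
    rw [hzi i] at this
    simp at this
    omega
  have hzmove : IsMove A z := by
    show A.mulVec z = 0
    rw [hz, Matrix.mulVec_sub, hfib, sub_self]
  set T := {s ∈ GraverS A | s.1 ≤ posOf z ∧ s.2 ≤ negOf z} with hT
  have hTne : T.Nonempty := ⟨(posOf z, negOf z), ⟨z, hzmove, hz0, rfl⟩, le_refl _, le_refl _⟩
  have hTwf : T.IsWF := (graverS_isPWO.mono (Set.sep_subset _ _)).isWF
  obtain ⟨g, hgmove, hg0, hgeq⟩ := (hTwf.min_mem hTne).1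
  have hgle : (hTwf.min hTne).1 ≤ posOf z ∧ (hTwf.min hTne).2 ≤ negOf z :=
    (hTwf.min_mem hTne).2
  rw [hgeq] at hgle
  have hgGrav : g ∈ Graver A := by
    refine ⟨hgmove, hg0, fun s hs hlt => ?_⟩
    rw [← hgeq] at hlt
    exact hTwf.not_lt_min hTne
      ⟨hs, le_trans hlt.le.1 (by rw [hgeq]; exact hgle.1),
        le_trans hlt.le.2 (by rw [hgeq]; exact hgle.2)⟩ hlt
  -- pointwise sign-compatibility facts
  have hple : ∀ i, posOf g i ≤ posOf z i := fun i => hgle.1 i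
  have hnle : ∀ i, negOf g i ≤ negOf z i := fun i => hgle.2 i
  have hxge : ∀ i, negOf g i ≤ x i := by
    intro i
    have h1 := hnle i
    have h2 := hzi i
    simp only [posOf, negOf] at h1 ⊢
    omega
  set x1 : Fin p → ℕ := fun i => x i - negOf g i + posOf g i with hx1
  have hx1int : natToInt x1 = natToInt x + g := by
    funext i
    have := hxge i
    simp only [hx1, natToInt, posOf, negOf, Pi.add_apply] at this ⊢
    push_cast [this]
    omega
  have hstep : MStep (Graver A) x x1 := ⟨g, hgGrav, Or.inl hx1int⟩
  have hfib1 : A.mulVec (natToInt x1) = A.mulVec (natToInt y) := by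
    rw [hx1int, Matrix.mulVec_add, show A.mulVec g = 0 from hgmove, add_zero, hfib]
  have habs : ∀ i, ((x1 i : ℤ) - (y i : ℤ)).natAbs + (g i).natAbs
      = ((x i : ℤ) - (y i : ℤ)).natAbs := by
    intro i
    have h1 := hple i
    have h2 := hnle i
    have h3 := hzi i
    have h4 := congrFun hx1int i
    simp only [posOf, negOf, natToInt, Pi.add_apply] at h1 h2 h4
    omega
  have hgpos : 0 < ∑ i, (g i).natAbs := by
    rcases Function.ne_iff.mp hg0 with ⟨i, hi⟩
    calc 0 < (g i).natAbs := by simpa using hi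
    _ ≤ ∑ i, (g i).natAbs := Finset.single_le_sum (f := fun j => (g j).natAbs) (fun j _ => Nat.zero_le _) (Finset.mem_univ i)
  have hsum : (∑ i, ((x1 i : ℤ) - (y i : ℤ)).natAbs) + ∑ i, (g i).natAbs = m := by
    rw [← hm, ← Finset.sum_add_distrib]
    exact Finset.sum_congr rfl fun i _ => habs i
  exact Relation.ReflTransGen.head hstep
    (IH _ (by omega) x1 y rfl hfib1)

lemma graver_basis : IsMarkovBasis A (Graver A) :=
  ⟨graver_finite, fun g hg => hg.1, fun t x hx y hy =>
    graver_connect _ x y rfl (by rw [mem_fiber.mp hx, mem_fiber.mp hy])⟩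

lemma exists_minimal_markov : ∃ B : Set (Fin p → ℤ), IsMinimalMarkovBasis A B := by
  classical
  have hPne : {n | ∃ B : Set (Fin p → ℤ), IsMarkovBasis A B ∧ B.ncard = n}.Nonempty :=
    ⟨(Graver A).ncard, Graver A, graver_basis, rfl⟩
  obtain ⟨B, hB, hcard⟩ := Nat.sInf_mem hPne
  refine ⟨B, hB, fun B' hB' hMB' => ?_⟩
  have h2 : B'.ncard < B.ncard := Set.ncard_lt_ncard hB' hB.1
  have := Nat.sInf_le (show B'.ncard ∈ {n | ∃ B : Set (Fin p → ℤ), IsMarkovBasis A B ∧ B.ncard = n} from ⟨B', hMB', rfl⟩)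
  omega


/-! ### The two main implications -/

lemma one_to_three (hw : HW A w)
    (h1 : ∀ z ∈ BMF A, ∀ C ∈ fiberClasses A (A.mulVec (natToInt (posOf z))),
      ∃ x : Fin p → ℕ, C = {x}) :
    ∀ B : Set (Fin p → ℤ), IsMinimalMarkovBasis A B → ∀ z ∈ B,
      IsIndispensableMonomial A (posOf z) ∧ IsIndispensableMonomial A (negOf z) := by
  intro B hBmin z hzB
  have hzmove : IsMove A z := hBmin.1.2.1 z hzB
  by_cases hacc : Accessible (Bmoves A (degOf z - 1)) (posOf z) (negOf z)
  · exfalso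
    refine hBmin.2 (B \ {z}) ⟨Set.diff_subset, fun hsub => (hsub hzB).2 rfl⟩ ?_
    exact remove_redundant hw hBmin.1 hacc
  · have hz0 : z ≠ 0 := by
      intro hc
      subst hc
      exact hacc (by
        rw [show posOf (0 : Fin p → ℤ) = negOf 0 from
          funext fun i => by simp [posOf, negOf]]
        exact .refl)
    have hzBMF : z ∈ BMF A := ⟨hzmove, hz0, hacc⟩
    set t := A.mulVec (natToInt (posOf z)) with ht
    have hposfib : posOf z ∈ fiberOf A t := rfl
    have hnegfib : negOf z ∈ fiberOf A t := (mulVec_pos_eq_neg hzmove).symm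
    have hss : sampleSize A t = degOf z := sampleSize_eq hw hposfib
    have hsingle : ∀ x₀, x₀ ∈ fiberOf A t → ∀ y, y ∈ fiberOf A t →
        Accessible (Bmoves A (degOf z - 1)) x₀ y → y = x₀ := by
      intro x₀ hx₀ y hyfib hyacc
      obtain ⟨c, hc⟩ := h1 z hzBMF _ ⟨x₀, hx₀, rfl⟩
      rw [hss] at hc
      have hy : y ∈ ({c} : Set (Fin p → ℕ)) := by rw [← hc]; exact ⟨hyfib, hyacc⟩
      have hx : x₀ ∈ ({c} : Set (Fin p → ℕ)) := by rw [← hc]; exact ⟨hx₀, .refl⟩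
      rw [Set.mem_singleton_iff] at hy hx
      rw [hy, hx]
    constructor
    · intro B'' hB''
      have hBacc : Accessible B'' (posOf z) (negOf z) :=
        hB''.2.2 t _ hposfib _ hnegfib
      obtain ⟨g, hgB, u, v, hu, hv, hor⟩ :=
        exit_step hw hB''.2.1 (rfl : ∑ i, posOf z i = degOf z) _ hBacc hacc
      have hufib : u ∈ fiberOf A t :=
        mem_fiber.mpr (by rw [access_fiber bmoves_moves hu, mem_fiber.mp hposfib])
      have hupos : u = posOf z := hsingle (posOf z) hposfib u hufib hu
      rcases hor with ⟨hgu, -⟩ | ⟨hgu, -⟩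
      · exact ⟨g, hgB, Or.inl (by rw [hgu, hupos])⟩
      · exact ⟨g, hgB, Or.inr (by rw [hgu, hupos])⟩
    · intro B'' hB''
      have hBacc : Accessible B'' (negOf z) (posOf z) :=
        hB''.2.2 t _ hnegfib _ hposfib
      have hacc' : ¬ Accessible (Bmoves A (degOf z - 1)) (negOf z) (posOf z) :=
        fun hc => hacc (access_symm hc)
      obtain ⟨g, hgB, u, v, hu, hv, hor⟩ :=
        exit_step hw hB''.2.1 ((deg_pos_eq_neg hw hzmove).symm :
          ∑ i, negOf z i = degOf z) _ hBacc hacc'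
      have hufib : u ∈ fiberOf A t :=
        mem_fiber.mpr (by rw [access_fiber bmoves_moves hu, mem_fiber.mp hnegfib])
      have huneg : u = negOf z := hsingle (negOf z) hnegfib u hufib hu
      rcases hor with ⟨hgu, -⟩ | ⟨hgu, -⟩
      · exact ⟨g, hgB, Or.inl (by rw [hgu, huneg])⟩
      · exact ⟨g, hgB, Or.inr (by rw [hgu, huneg])⟩

lemma two_to_one (hw : HW A w)
    (h2 : ∃ B : Set (Fin p → ℤ), IsMinimalMarkovBasis A B ∧ ∀ z ∈ B,
      IsIndispensableMonomial A (posOf z) ∧ IsIndispensableMonomial A (negOf z)) :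
    ∀ z ∈ BMF A, ∀ C ∈ fiberClasses A (A.mulVec (natToInt (posOf z))),
      ∃ x : Fin p → ℕ, C = {x} := by
  obtain ⟨B, hBmin, hind⟩ := h2
  intro z hzBMF C hC
  obtain ⟨x₀, hx₀fib, rfl⟩ := hC
  by_contra hns
  set t := A.mulVec (natToInt (posOf z)) with ht
  have hzmove : IsMove A z := hzBMF.1
  have hposfib : posOf z ∈ fiberOf A t := rfl
  have hnegfib : negOf z ∈ fiberOf A t := (mulVec_pos_eq_neg hzmove).symm
  have hss : sampleSize A t = degOf z := sampleSize_eq hw hposfib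
  rw [hss] at hns
  set n := degOf z with hn
  have hsx₀ : ∑ i, x₀ i = n :=
    (sum_eq_of_mulVec_eq hw (by rw [mem_fiber.mp hx₀fib, mem_fiber.mp hposfib]) :
      ∑ i, x₀ i = ∑ i, posOf z i)
  have hx₀C : x₀ ∈ {y | y ∈ fiberOf A t ∧ Accessible (Bmoves A (n-1)) x₀ y} :=
    ⟨hx₀fib, .refl⟩
  obtain ⟨x1, hx1C, hx1ne⟩ : ∃ x1, x1 ∈ {y | y ∈ fiberOf A t ∧
      Accessible (Bmoves A (n-1)) x₀ y} ∧ x1 ≠ x₀ := by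
    by_contra h
    push_neg at h
    refine hns ⟨x₀, Set.eq_singleton_iff_unique_mem.mpr ⟨hx₀C, fun y hy => h y hy⟩⟩
  -- a point of the fiber not accessible from x₀ by low-degree moves
  obtain ⟨y, hyfib, hyB, hny⟩ :
      ∃ y, y ∈ fiberOf A t ∧ Accessible B x₀ y ∧
        ¬ Accessible (Bmoves A (n-1)) x₀ y := by
    by_cases hzp : Accessible (Bmoves A (n-1)) x₀ (posOf z)
    · refine ⟨negOf z, hnegfib, hBmin.1.2.2 t _ hx₀fib _ hnegfib, fun hc => ?_⟩
      exact hzBMF.2.2 ((access_symm hzp).trans hc)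
    · exact ⟨posOf z, hposfib, hBmin.1.2.2 t _ hx₀fib _ hposfib, hzp⟩
  obtain ⟨g, hgB, u, v, hu, hv, hor⟩ :=
    exit_step hw hBmin.1.2.1 hsx₀ y hyB hny
  -- a companion of u in the same class
  obtain ⟨u'', hu''ne, hu''acc⟩ :
      ∃ u'', u ≠ u'' ∧ Accessible (Bmoves A (n-1)) u u'' := by
    by_cases he : u = x₀
    · exact ⟨x1, by rw [he]; exact fun hc => hx1ne hc.symm,
        by rw [he]; exact hx1C.2⟩
    · exact ⟨x₀, he, access_symm hu⟩
  have hsu : ∑ i, u i = n := by rw [access_sum hw bmoves_moves hu, hsx₀]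
  have hn1 : 1 ≤ n := by
    by_contra hcon
    have hn0 : ∑ i, u i = 0 := by omega
    have hn0' : ∑ i, u'' i = 0 := by
      rw [access_sum hw bmoves_moves hu''acc]; omega
    refine hu''ne (funext fun i => ?_)
    have a1 := Finset.sum_eq_zero_iff.mp hn0 i (Finset.mem_univ i)
    have a2 := Finset.sum_eq_zero_iff.mp hn0' i (Finset.mem_univ i)
    omega
  obtain ⟨B'', hB''MB, havoid⟩ := replacement hw hBmin.1 hsu hn1 hu''ne hu''acc
  have hind_u : IsIndispensableMonomial A u := by
    rcases hor with ⟨hgu, -⟩ | ⟨hgu, -⟩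
    · rw [← hgu]; exact (hind g hgB).1
    · rw [← hgu]; exact (hind g hgB).2
  obtain ⟨e, heB'', hor'⟩ := hind_u B'' hB''MB
  rcases hor' with he | he
  · exact (havoid e heB'').1 he
  · exact (havoid e heB'').2 he

end Hom

end MBAux

/-- all equivalence classes of all fibers of `B_MF` are singletons iff
some minimal Markov basis consists of moves with both parts indispensable monomials,
iff every minimal Markov basis does. -/
theorem all_classes_singleton_iff_all_monomials_indispensable
    {p d : ℕ} (hp : 0 < p) (hd : 0 < d)
    (A : Matrix (Fin d) (Fin p) ℤ) (hA : IsHomogeneousMatrix A) :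
    ((∀ z ∈ BMF A, ∀ C ∈ fiberClasses A (A.mulVec (natToInt (posOf z))),
        ∃ x : Fin p → ℕ, C = {x}) ↔
      (∃ B : Set (Fin p → ℤ), IsMinimalMarkovBasis A B ∧ ∀ z ∈ B,
        IsIndispensableMonomial A (posOf z) ∧ IsIndispensableMonomial A (negOf z))) ∧
    ((∃ B : Set (Fin p → ℤ), IsMinimalMarkovBasis A B ∧ ∀ z ∈ B,
        IsIndispensableMonomial A (posOf z) ∧ IsIndispensableMonomial A (negOf z)) ↔
      (∀ B : Set (Fin p → ℤ), IsMinimalMarkovBasis A B → ∀ z ∈ B,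
        IsIndispensableMonomial A (posOf z) ∧ IsIndispensableMonomial A (negOf z))) := by
  obtain ⟨w, hw⟩ := hA
  have hw' : MBAux.HW A w := hw
  obtain ⟨B₀, hB₀⟩ := MBAux.exists_minimal_markov (A := A)
  constructor
  · constructor
    · intro h1
      exact ⟨B₀, hB₀, MBAux.one_to_three hw' h1 B₀ hB₀⟩
    · exact MBAux.two_to_one hw'
  · constructor
    · intro h2
      exact MBAux.one_to_three hw' (MBAux.two_to_one hw' h2)
    · intro h3
      exact ⟨B₀, hB₀, h3 B₀ hB₀⟩
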